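/- Summing the synaptic saliencies over any single layer recovers the total connectivity: Σ_{(i,j)∈E_k} a_{·i} · θ_{i,j} · a_{j·} = φ^tot(θ), for every k = 1,...,K−1. -/
import Mathlib

open Finset

/-- Contiguity of an edge sequence: consecutive edges share endpoints. -/
def Contig (K : ℕ) (γ : Fin (K-1) → ℕ × ℕ) : Prop :=
  ∀ k : Fin (K-1), ∀ h : k.val + 1 < K - 1, (γ k).2 = (γ ⟨k.val + 1, h⟩).1

instance (K : ℕ) (γ : Fin (K-1) → ℕ × ℕ) : Decidable (Contig K γ) := by
  unfold Contig; infer_instance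

/-- Total connectivity: sum over all contiguous input-to-output edge sequences of
the product of edge weights. -/
noncomputable def phiTot (K : ℕ) (E : ℕ → Finset (ℕ × ℕ)) (θ : ℕ → ℕ → ℕ → ℝ) : ℝ :=
  ∑ γ ∈ (Fintype.piFinset (fun k : Fin (K-1) => E k.val)).filter (fun γ => Contig K γ),
    ∏ k : Fin (K-1), θ k.val (γ k).1 (γ k).2

/-- Total absolute weight of layer k. -/
noncomputable def Snorm (E : ℕ → Finset (ℕ × ℕ)) (W : ℕ → ℕ → ℕ → ℝ) (k : ℕ) : ℝ :=
  ∑ e ∈ E k, |W k e.1 e.2|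

/-- Per-layer normalized weights. -/
noncomputable def thetaNorm (E : ℕ → Finset (ℕ × ℕ)) (W : ℕ → ℕ → ℕ → ℝ)
    (k i j : ℕ) : ℝ :=
  |W k i j| / Snorm E W k

/-- Connectivity from the input layer to node `r` in layer `l`. -/
noncomputable def aIn (E : ℕ → Finset (ℕ × ℕ)) (θ : ℕ → ℕ → ℕ → ℝ) (l r : ℕ) : ℝ :=
  ∑ γ ∈ (Fintype.piFinset (fun k : Fin l => E k.val)).filter
      (fun γ => (∀ k : Fin l, ∀ h : k.val + 1 < l, (γ k).2 = (γ ⟨k.val + 1, h⟩).1)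
        ∧ ∀ h : 0 < l, (γ ⟨l - 1, by omega⟩).2 = r),
    ∏ k : Fin l, θ k.val (γ k).1 (γ k).2

/-- Connectivity from node `r` in layer `l` to the output layer (layer K-1). -/
noncomputable def aOut (K : ℕ) (E : ℕ → Finset (ℕ × ℕ)) (θ : ℕ → ℕ → ℕ → ℝ)
    (l r : ℕ) : ℝ :=
  ∑ γ ∈ (Fintype.piFinset (fun k : Fin (K - 1 - l) => E (l + k.val))).filter
      (fun γ => (∀ k : Fin (K - 1 - l), ∀ h : k.val + 1 < K - 1 - l,
          (γ k).2 = (γ ⟨k.val + 1, h⟩).1)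
        ∧ ∀ h : 0 < K - 1 - l, (γ ⟨0, h⟩).1 = r),
    ∏ k : Fin (K - 1 - l), θ (l + k.val) (γ k).1 (γ k).2

private lemma congrFin {n : ℕ} (f : Fin n → ℕ × ℕ) {a b : ℕ} (ha : a < n) (hb : b < n)
    (h : a = b) : f ⟨a, ha⟩ = f ⟨b, hb⟩ := by subst h; rfl

/-- Combine a prefix path, a middle edge and a suffix path into a full path. -/
private def comb (K k : ℕ) (e : ℕ × ℕ) (α : Fin k → ℕ × ℕ)
    (β : Fin (K-1-(k+1)) → ℕ × ℕ) : Fin (K-1) → ℕ × ℕ :=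
  fun j => if h : j.val < k then α ⟨j.val, h⟩
    else if h2 : j.val = k then e
    else β ⟨j.val - (k+1), by have := j.isLt; omega⟩

private lemma comb_lt {K k : ℕ} (e : ℕ × ℕ) (α : Fin k → ℕ × ℕ)
    (β : Fin (K-1-(k+1)) → ℕ × ℕ) {j : ℕ} (hj : j < k) (h : j < K-1) :
    comb K k e α β ⟨j, h⟩ = α ⟨j, hj⟩ := by
  simp [comb, hj]

private lemma comb_eq {K k : ℕ} (e : ℕ × ℕ) (α : Fin k → ℕ × ℕ)
    (β : Fin (K-1-(k+1)) → ℕ × ℕ) (h : k < K-1) :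
    comb K k e α β ⟨k, h⟩ = e := by
  simp [comb]

private lemma comb_gt {K k : ℕ} (e : ℕ × ℕ) (α : Fin k → ℕ × ℕ)
    (β : Fin (K-1-(k+1)) → ℕ × ℕ) {j : ℕ} (hj : k < j) (h : j < K-1) :
    comb K k e α β ⟨j, h⟩ = β ⟨j - (k+1), by omega⟩ := by
  simp only [comb]
  rw [dif_neg (by omega), dif_neg (by omega)]

/-- Split a product over a full path at position `k`. -/
private lemma prod_split {K k : ℕ} (hk : k < K - 1) (θ : ℕ → ℕ → ℕ → ℝ)
    (γ : Fin (K-1) → ℕ × ℕ) :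
    ∏ j : Fin (K-1), θ j.val (γ j).1 (γ j).2 =
      (∏ j : Fin k, θ j.val (γ ⟨j.val, by have := j.isLt; omega⟩).1
          (γ ⟨j.val, by have := j.isLt; omega⟩).2)
      * θ k (γ ⟨k, hk⟩).1 (γ ⟨k, hk⟩).2
      * ∏ j : Fin (K-1-(k+1)), θ (k+1+j.val) (γ ⟨k+1+j.val, by have := j.isLt; omega⟩).1
          (γ ⟨k+1+j.val, by have := j.isLt; omega⟩).2 := by
  classical
  set g : ℕ → ℝ := fun j =>
    if h : j < K - 1 then θ j (γ ⟨j, h⟩).1 (γ ⟨j, h⟩).2 else 1 with hg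
  have h1 : ∏ j : Fin (K-1), θ j.val (γ j).1 (γ j).2 = ∏ j ∈ Finset.range (K-1), g j := by
    rw [← Fin.prod_univ_eq_prod_range]
    exact Finset.prod_congr rfl fun j _ => by simp [hg, j.isLt]
  rw [h1, ← Finset.prod_range_mul_prod_Ico g (show k+1 ≤ K-1 by omega),
    Finset.prod_range_succ, Finset.prod_Ico_eq_prod_range]
  congr 1
  · congr 1
    · rw [← Fin.prod_univ_eq_prod_range]
      exact Finset.prod_congr rfl fun j _ => by
        have := j.isLt; simp [hg, show (j:ℕ) < K - 1 by omega]
    · simp [hg, hk]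
  · refine ((Fin.prod_univ_eq_prod_range (fun j => g (k+1+j)) (K-1-(k+1))).symm).trans ?_
    exact Finset.prod_congr rfl fun j _ => by
      have := j.isLt; simp [hg, show k+1+(j:ℕ) < K - 1 by omega]

/-- summing the synaptic saliencies over any single layer recovers
the total connectivity. -/
theorem saliency_sum_eq_phiTot
    (K : ℕ) (E : ℕ → Finset (ℕ × ℕ)) (θ : ℕ → ℕ → ℕ → ℝ)
    (hθ0 : ∀ k i j, 0 ≤ θ k i j)
    (k : ℕ) (hk : k < K - 1) :
    ∑ e ∈ E k, aIn E θ k e.1 * θ k e.1 e.2 * aOut K E θ (k+1) e.2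
      = phiTot K E θ := by
  classical
  unfold aIn aOut phiTot
  simp only [Finset.sum_mul, Finset.mul_sum]
  conv_lhs => enter [2, e]; rw [← Finset.sum_product']
  rw [Finset.sum_sigma']
  refine Finset.sum_bij'
    (fun x _ => comb K k x.1 x.2.2 x.2.1)
    (fun γ _ => ⟨γ ⟨k, hk⟩, fun i => γ ⟨k+1+i.val, by have := i.isLt; omega⟩,
      fun i => γ ⟨i.val, by have := i.isLt; omega⟩⟩)
    ?_ ?_ ?_ ?_ ?_
  · -- hi : comb lands in the filtered path set
    rintro ⟨e, β, α⟩ hx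
    simp only [Finset.mem_sigma, Finset.mem_product, Finset.mem_filter,
      Fintype.mem_piFinset] at hx ⊢
    obtain ⟨he, ⟨hβpi, hβc, hβe⟩, ⟨hαpi, hαc, hαe⟩⟩ := hx
    constructor
    · rintro ⟨jv, hjlt⟩
      by_cases h1 : jv < k
      · rw [comb_lt e α β h1]; exact hαpi _
      · by_cases h2 : jv = k
        · rw [congrFin (comb K k e α β) hjlt (by omega) h2, comb_eq e α β hk]
          simpa [h2] using he
        · have hgt : k < jv := by omega
          rw [comb_gt e α β hgt]
          have := hβpi ⟨jv - (k+1), by omega⟩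
          simpa [show k + 1 + (jv - (k+1)) = jv by omega] using this
    · rintro ⟨jv, hjlt⟩ h
      simp only at h
      by_cases h1 : jv + 1 < k
      · rw [comb_lt e α β (by omega), comb_lt e α β h1]
        exact hαc ⟨jv, by omega⟩ h1
      · by_cases h2 : jv + 1 = k
        · rw [comb_lt e α β (by omega),
            congrFin (comb K k e α β) h (by omega) h2, comb_eq e α β hk]
          have := hαe (by omega)
          rw [congrFin α (by omega) (by omega) (show k - 1 = jv by omega)] at this
          exact this
        · by_cases h3 : jv = k
          · rw [congrFin (comb K k e α β) hjlt hk h3, comb_eq e α β hk,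
              comb_gt e α β (by omega) h]
            have h0 : 0 < K - 1 - (k+1) := by omega
            have := hβe h0
            rw [congrFin β h0 (by omega) (show 0 = jv + 1 - (k+1) by omega)] at this
            exact this.symm
          · have hgt : k < jv := by omega
            rw [comb_gt e α β hgt, comb_gt e α β (by omega) h]
            have := hβc ⟨jv - (k+1), by omega⟩
              (show jv - (k+1) + 1 < K - 1 - (k+1) by omega)
            rw [congrFin β (by omega) (by omega)
              (show jv - (k+1) + 1 = jv + 1 - (k+1) by omega)] at this
            exact this
  · -- hj : splitting a path lands in the sigma set
    intro γ hγ
    simp only [Finset.mem_filter, Fintype.mem_piFinset] at hγ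
    obtain ⟨hpi, hc⟩ := hγ
    simp only [Finset.mem_sigma, Finset.mem_product, Finset.mem_filter,
      Fintype.mem_piFinset]
    refine ⟨hpi _, ⟨fun i => hpi _, ?_, ?_⟩, ⟨fun i => hpi _, ?_, ?_⟩⟩
    · intro i h
      exact hc ⟨k + 1 + i.val, by have := i.isLt; omega⟩
        (show k + 1 + i.val + 1 < K - 1 by omega)
    · intro h
      exact (hc ⟨k, hk⟩ (show k + 1 < K - 1 by omega)).symm
    · intro i h
      exact hc ⟨i.val, by have := i.isLt; omega⟩ (show i.val + 1 < K - 1 by omega)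
    · intro h
      have := hc ⟨k - 1, by omega⟩ (show k - 1 + 1 < K - 1 by omega)
      rw [congrFin γ (by omega) hk (show k - 1 + 1 = k by omega)] at this
      exact this
  · -- left inverse
    rintro ⟨e, β, α⟩ hx
    dsimp only
    have h1 : comb K k e α β ⟨k, hk⟩ = e := comb_eq e α β hk
    have h2 : (fun i : Fin (K-1-(k+1)) =>
        comb K k e α β ⟨k+1+i.val, by have := i.isLt; omega⟩) = β := by
      funext i
      rw [comb_gt (j := k+1+i.val) e α β (by omega) (by have := i.isLt; omega)]
      exact congrFin β (by have := i.isLt; omega) i.isLt (by omega)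
    have h3 : (fun i : Fin k =>
        comb K k e α β ⟨i.val, by have := i.isLt; omega⟩) = α := by
      funext i
      rw [comb_lt e α β i.isLt]
    exact Sigma.ext h1 (heq_of_eq (Prod.ext h2 h3))
  · -- right inverse
    intro γ hγ
    dsimp only
    funext j
    obtain ⟨jv, hjlt⟩ := j
    by_cases h1 : jv < k
    · rw [comb_lt _ _ _ h1]
    · by_cases h2 : jv = k
      · subst h2
        rw [comb_eq _ _ _ hjlt]
      · rw [comb_gt _ _ _ (show k < jv by omega)]
        exact congrFin (a := k + 1 + (jv - (k+1))) (b := jv) γ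
          (by omega) hjlt (by omega)
  · -- values agree
    rintro ⟨e, β, α⟩ hx
    dsimp only
    rw [prod_split hk θ (comb K k e α β)]
    congr 1
    · congr 1
      · exact Finset.prod_congr rfl fun j _ => by
          rw [comb_lt e α β j.isLt]
      · rw [comb_eq e α β hk]
    · refine Finset.prod_congr rfl fun j _ => ?_
      rw [comb_gt (j := k+1+j.val) e α β (by omega) (by have := j.isLt; omega)]
      rw [congrFin β (by have := j.isLt; omega) j.isLt
            (show k + 1 + j.val - (k+1) = j.val by omega)]
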